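/- (Mandelbaum's counterexample) For R = [[1, -2],[1, 1]], there exists a continuous driving function f : [0,∞) → ℝ² with f(0) ≥ 0 for which the Skorokhod problem admits two distinct solutions (g, m) and (ḡ, m̄) with g ≠ ḡ. -/

import Mathlib

open Set Matrix

/-- The Skorokhod problem on `[0,∞)` in the nonnegative quadrant of `ℝ²` with
reflection matrix `R` and driving function `f`: `(g, m)` is a solution. -/
def IsSkorokhod (R : Matrix (Fin 2) (Fin 2) ℝ) (f g m : ℝ → Fin 2 → ℝ) : Prop :=
  ContinuousOn g (Set.Ici 0) ∧ ContinuousOn m (Set.Ici 0) ∧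
  (∀ t ∈ Set.Ici (0:ℝ), ∀ j, 0 ≤ g t j) ∧
  m 0 = 0 ∧
  (∀ j, MonotoneOn (fun t => m t j) (Set.Ici 0)) ∧
  (∀ t ∈ Set.Ici (0:ℝ), g t = f t + R.mulVec (m t)) ∧
  (∀ j, ∀ s t, 0 ≤ s → s ≤ t → (∀ r ∈ Set.Icc s t, 0 < g r j) → m s j = m t j)

/-- Uniqueness of solutions of the Skorokhod problem with matrix `R`, for every
continuous driving function `f` with `f 0 ≥ 0`. -/
def SkorokhodUnique (R : Matrix (Fin 2) (Fin 2) ℝ) : Prop :=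
  ∀ f : ℝ → Fin 2 → ℝ, ContinuousOn f (Set.Ici 0) → (∀ j, 0 ≤ f 0 j) →
    ∀ g m g' m', IsSkorokhod R f g m → IsSkorokhod R f g' m' →
      ∀ t ∈ Set.Ici (0:ℝ), g t = g' t ∧ m t = m' t



noncomputable def kk (t : ℝ) : ℤ := ⌊Real.logb 4 (t/3)⌋

lemma kk_mem {t : ℝ} (ht : 0 < t) : 3 * (4:ℝ)^(kk t) ≤ t ∧ t < 12 * (4:ℝ)^(kk t) := by
  have hkk : kk t = ⌊Real.logb 4 (t/3)⌋ := rfl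
  have hx : (0:ℝ) < t/3 := by positivity
  have h1 : (4:ℝ) ^ Real.logb 4 (t/3) = t/3 := Real.rpow_logb (by norm_num) (by norm_num) hx
  have e1 : ((4:ℝ)^(kk t)) = (4:ℝ) ^ ((kk t : ℝ)) := (Real.rpow_intCast 4 (kk t)).symm
  have e2 : ((4:ℝ)^(kk t + 1)) = (4:ℝ) ^ (((kk t : ℝ)) + 1) := by
    rw [← Real.rpow_intCast 4 (kk t + 1)]; push_cast; ring_nf
  constructor
  · have := Real.rpow_le_rpow_of_exponent_le (by norm_num : (1:ℝ) ≤ 4) (Int.floor_le (Real.logb 4 (t/3)))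
    rw [h1] at this; rw [← hkk] at this; rw [e1]; linarith
  · have := Real.rpow_lt_rpow_of_exponent_lt (by norm_num : (1:ℝ) < 4) (Int.lt_floor_add_one (Real.logb 4 (t/3)))
    rw [h1, ← hkk] at this
    have e3 : (4:ℝ)^(kk t + 1) = 4 * (4:ℝ)^(kk t) := by rw [zpow_add₀ (by norm_num : (4:ℝ) ≠ 0)]; ring
    rw [e2] at e3
    nlinarith [this, e3]

lemma kk_eq {t : ℝ} {j : ℤ} (h1 : 3*(4:ℝ)^j ≤ t) (h2 : t < 12*(4:ℝ)^j) : kk t = j := by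
  have hj : (0:ℝ) < (4:ℝ)^j := by positivity
  have ht : 0 < t := by nlinarith
  obtain ⟨m1, m2⟩ := kk_mem ht
  have hk : (0:ℝ) < (4:ℝ)^(kk t) := by positivity
  by_contra hne
  rcases lt_or_gt_of_ne hne with h | h
  · -- kk t < j : kk t + 1 ≤ j
    have : (4:ℝ)^(kk t + 1) ≤ (4:ℝ)^j := zpow_le_zpow_right₀ (by norm_num) (by omega)
    rw [zpow_add₀ (by norm_num : (4:ℝ) ≠ 0)] at this
    simp only [zpow_one] at this
    nlinarith
  · have : (4:ℝ)^(j + 1) ≤ (4:ℝ)^(kk t) := zpow_le_zpow_right₀ (by norm_num) (by omega)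
    rw [zpow_add₀ (by norm_num : (4:ℝ) ≠ 0)] at this
    simp only [zpow_one] at this
    nlinarith

lemma kk_mono {s t : ℝ} (hs : 0 < s) (hst : s ≤ t) : kk s ≤ kk t := by
  obtain ⟨a1, a2⟩ := kk_mem hs
  obtain ⟨b1, b2⟩ := kk_mem (lt_of_lt_of_le hs hst)
  have : (4:ℝ)^(kk s) < (4:ℝ)^(kk t + 1) := by
    rw [zpow_add₀ (by norm_num : (4:ℝ) ≠ 0)]
    simp only [zpow_one]
    nlinarith
  have := (zpow_lt_zpow_iff_right₀ (by norm_num : (1:ℝ) < 4)).mp this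
  omega

noncomputable def extnd (b : ℝ → ℝ) (t : ℝ) : ℝ :=
  if t ≤ 0 then 0 else (4:ℝ)^(kk t) * b (t / (4:ℝ)^(kk t))

lemma ext_zero (b : ℝ → ℝ) : extnd b 0 = 0 := by simp [extnd]

lemma ext_pos_eq (b : ℝ → ℝ) {t : ℝ} (ht : 0 < t) :
    extnd b t = (4:ℝ)^(kk t) * b (t / (4:ℝ)^(kk t)) := if_neg (not_le.2 ht)

lemma ext_block {b : ℝ → ℝ} (hb : b 12 = 4 * b 3) {j : ℤ} {t : ℝ}
    (h1 : 3*(4:ℝ)^j ≤ t) (h2 : t ≤ 12*(4:ℝ)^j) :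
    extnd b t = (4:ℝ)^j * b (t/(4:ℝ)^j) := by
  have hj : (0:ℝ) < (4:ℝ)^j := by positivity
  have ht : 0 < t := by nlinarith
  rcases lt_or_eq_of_le h2 with h2' | h2'
  · rw [ext_pos_eq b ht, kk_eq h1 h2']
  · have hk : kk t = j + 1 := by
      apply kk_eq
      · rw [zpow_add₀ (by norm_num : (4:ℝ) ≠ 0)]; simp only [zpow_one]; nlinarith
      · rw [zpow_add₀ (by norm_num : (4:ℝ) ≠ 0)]; simp only [zpow_one]; nlinarith
    rw [ext_pos_eq b ht, hk]
    have e3 : (4:ℝ)^(j + 1) = 4 * (4:ℝ)^j := by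
      rw [zpow_add₀ (by norm_num : (4:ℝ) ≠ 0)]; ring
    rw [e3]
    have d1 : t / (4 * (4:ℝ)^j) = 3 := by
      rw [h2']; field_simp; ring
    rw [d1]
    have d2 : t / (4:ℝ)^j = 12 := by rw [h2']; field_simp
    rw [d2, hb]; ring

-- base profiles on [3,12]
noncomputable def bF1 (x : ℝ) : ℝ := if x ≤ 4 then 6*x-18 else if x ≤ 6 then 18-3*x else if x ≤ 8 then 6*x-36 else 36-3*x
noncomputable def bF2 (x : ℝ) : ℝ := if x ≤ 4 then 6-3*x else if x ≤ 6 then -6 else if x ≤ 8 then 12-3*x else -12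
noncomputable def bM1 (x : ℝ) : ℝ := if x ≤ 4 then 2 else if x ≤ 6 then 3*x-10 else 8
noncomputable def bM2 (x : ℝ) : ℝ := if x ≤ 4 then 3*x-8 else 4
noncomputable def bN1 (x : ℝ) : ℝ := if x ≤ 8 then 4 else 3*x-20
noncomputable def bN2 (x : ℝ) : ℝ := if x ≤ 6 then 2 else if x ≤ 8 then 3*x-16 else 8
noncomputable def bG1 (x : ℝ) : ℝ := if x ≤ 6 then 0 else if x ≤ 8 then 6*x-36 else 36-3*x
noncomputable def bG2 (x : ℝ) : ℝ := if x ≤ 4 then 0 else if x ≤ 6 then 3*x-12 else if x ≤ 8 then 24-3*x else 0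
noncomputable def bH1 (x : ℝ) : ℝ := if x ≤ 4 then 6*x-18 else if x ≤ 6 then 18-3*x else 0
noncomputable def bH2 (x : ℝ) : ℝ := if x ≤ 4 then 12-3*x else if x ≤ 8 then 0 else 3*x-24

lemma idG1 (x : ℝ) : bG1 x = bF1 x + (bM1 x - 2 * bM2 x) := by
  unfold bG1 bF1 bM1 bM2; split_ifs <;> first | linarith | ring1
lemma idG2 (x : ℝ) : bG2 x = bF2 x + (bM1 x + bM2 x) := by
  unfold bG2 bF2 bM1 bM2; split_ifs <;> first | linarith | ring1
lemma idH1 (x : ℝ) : bH1 x = bF1 x + (bN1 x - 2 * bN2 x) := by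
  unfold bH1 bF1 bN1 bN2; split_ifs <;> first | linarith | ring1
lemma idH2 (x : ℝ) : bH2 x = bF2 x + (bN1 x + bN2 x) := by
  unfold bH2 bF2 bN1 bN2; split_ifs <;> first | linarith | ring1

lemma gluF1 : bF1 12 = 4 * bF1 3 := by norm_num [bF1]
lemma gluF2 : bF2 12 = 4 * bF2 3 := by norm_num [bF2]
lemma gluM1 : bM1 12 = 4 * bM1 3 := by norm_num [bM1]
lemma gluM2 : bM2 12 = 4 * bM2 3 := by norm_num [bM2]
lemma gluN1 : bN1 12 = 4 * bN1 3 := by norm_num [bN1]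
lemma gluN2 : bN2 12 = 4 * bN2 3 := by norm_num [bN2]
lemma gluG1 : bG1 12 = 4 * bG1 3 := by norm_num [bG1]
lemma gluG2 : bG2 12 = 4 * bG2 3 := by norm_num [bG2]
lemma gluH1 : bH1 12 = 4 * bH1 3 := by norm_num [bH1]
lemma gluH2 : bH2 12 = 4 * bH2 3 := by norm_num [bH2]

-- Lipschitz: |b x - b y| ≤ 6 (y - x) for 3 ≤ x ≤ y ≤ 12
def Lip6 (b : ℝ → ℝ) : Prop := ∀ x y : ℝ, 3 ≤ x → x ≤ y → y ≤ 12 → |b x - b y| ≤ 6 * (y - x)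

lemma lipF1 : Lip6 bF1 := by
  intro x y h1 h2 h3; unfold bF1; split_ifs <;> (rw [abs_sub_le_iff]; constructor <;> linarith)
lemma lipF2 : Lip6 bF2 := by
  intro x y h1 h2 h3; unfold bF2; split_ifs <;> (rw [abs_sub_le_iff]; constructor <;> linarith)
lemma lipM1 : Lip6 bM1 := by
  intro x y h1 h2 h3; unfold bM1; split_ifs <;> (rw [abs_sub_le_iff]; constructor <;> linarith)
lemma lipM2 : Lip6 bM2 := by
  intro x y h1 h2 h3; unfold bM2; split_ifs <;> (rw [abs_sub_le_iff]; constructor <;> linarith)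
lemma lipN1 : Lip6 bN1 := by
  intro x y h1 h2 h3; unfold bN1; split_ifs <;> (rw [abs_sub_le_iff]; constructor <;> linarith)
lemma lipN2 : Lip6 bN2 := by
  intro x y h1 h2 h3; unfold bN2; split_ifs <;> (rw [abs_sub_le_iff]; constructor <;> linarith)
lemma lipG1 : Lip6 bG1 := by
  intro x y h1 h2 h3; unfold bG1; split_ifs <;> (rw [abs_sub_le_iff]; constructor <;> linarith)
lemma lipG2 : Lip6 bG2 := by
  intro x y h1 h2 h3; unfold bG2; split_ifs <;> (rw [abs_sub_le_iff]; constructor <;> linarith)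
lemma lipH1 : Lip6 bH1 := by
  intro x y h1 h2 h3; unfold bH1; split_ifs <;> (rw [abs_sub_le_iff]; constructor <;> linarith)
lemma lipH2 : Lip6 bH2 := by
  intro x y h1 h2 h3; unfold bH2; split_ifs <;> (rw [abs_sub_le_iff]; constructor <;> linarith)

def Bdd36 (b : ℝ → ℝ) : Prop := ∀ x : ℝ, 3 ≤ x → x ≤ 12 → |b x| ≤ 36

lemma bddF1 : Bdd36 bF1 := by intro x h1 h2; unfold bF1; split_ifs <;> (rw [abs_le]; constructor <;> linarith)
lemma bddF2 : Bdd36 bF2 := by intro x h1 h2; unfold bF2; split_ifs <;> (rw [abs_le]; constructor <;> linarith)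
lemma bddM1 : Bdd36 bM1 := by intro x h1 h2; unfold bM1; split_ifs <;> (rw [abs_le]; constructor <;> linarith)
lemma bddM2 : Bdd36 bM2 := by intro x h1 h2; unfold bM2; split_ifs <;> (rw [abs_le]; constructor <;> linarith)
lemma bddN1 : Bdd36 bN1 := by intro x h1 h2; unfold bN1; split_ifs <;> (rw [abs_le]; constructor <;> linarith)
lemma bddN2 : Bdd36 bN2 := by intro x h1 h2; unfold bN2; split_ifs <;> (rw [abs_le]; constructor <;> linarith)
lemma bddG1 : Bdd36 bG1 := by intro x h1 h2; unfold bG1; split_ifs <;> (rw [abs_le]; constructor <;> linarith)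
lemma bddG2 : Bdd36 bG2 := by intro x h1 h2; unfold bG2; split_ifs <;> (rw [abs_le]; constructor <;> linarith)
lemma bddH1 : Bdd36 bH1 := by intro x h1 h2; unfold bH1; split_ifs <;> (rw [abs_le]; constructor <;> linarith)
lemma bddH2 : Bdd36 bH2 := by intro x h1 h2; unfold bH2; split_ifs <;> (rw [abs_le]; constructor <;> linarith)

def MonB (b : ℝ → ℝ) : Prop := ∀ x y : ℝ, 3 ≤ x → x ≤ y → y ≤ 12 → b x ≤ b y

lemma monM1 : MonB bM1 := by intro x y h1 h2 h3; unfold bM1; split_ifs <;> linarith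
lemma monM2 : MonB bM2 := by intro x y h1 h2 h3; unfold bM2; split_ifs <;> linarith
lemma monN1 : MonB bN1 := by intro x y h1 h2 h3; unfold bN1; split_ifs <;> linarith
lemma monN2 : MonB bN2 := by intro x y h1 h2 h3; unfold bN2; split_ifs <;> linarith

def NonnegB (b : ℝ → ℝ) : Prop := ∀ x : ℝ, 3 ≤ x → x ≤ 12 → 0 ≤ b x

lemma nnM1 : NonnegB bM1 := by intro x h1 h2; unfold bM1; split_ifs <;> linarith
lemma nnM2 : NonnegB bM2 := by intro x h1 h2; unfold bM2; split_ifs <;> linarith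
lemma nnN1 : NonnegB bN1 := by intro x h1 h2; unfold bN1; split_ifs <;> linarith
lemma nnN2 : NonnegB bN2 := by intro x h1 h2; unfold bN2; split_ifs <;> linarith
lemma nnG1 : NonnegB bG1 := by intro x h1 h2; unfold bG1; split_ifs <;> linarith
lemma nnG2 : NonnegB bG2 := by intro x h1 h2; unfold bG2; split_ifs <;> linarith
lemma nnH1 : NonnegB bH1 := by intro x h1 h2; unfold bH1; split_ifs <;> linarith
lemma nnH2 : NonnegB bH2 := by intro x h1 h2; unfold bH2; split_ifs <;> linarith

section extprops
variable {b : ℝ → ℝ} (hglu : b 12 = 4 * b 3) (hlip : Lip6 b) (hbdd : Bdd36 b)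

include hglu hlip in
lemma ext_block_lip {j : ℤ} {s t : ℝ} (h1 : 3*(4:ℝ)^j ≤ s) (h2 : s ≤ t) (h3 : t ≤ 12*(4:ℝ)^j) :
    |extnd b t - extnd b s| ≤ 6 * (t - s) := by
  have hj : (0:ℝ) < (4:ℝ)^j := by positivity
  rw [ext_block hglu h1 (le_trans h2 h3), ext_block hglu (le_trans h1 h2) h3]
  rw [← mul_sub, abs_mul, abs_of_pos hj]
  have hb := hlip (s/(4:ℝ)^j) (t/(4:ℝ)^j) (by rw [le_div_iff₀ hj]; linarith)
    (by gcongr) (by rw [div_le_iff₀ hj]; linarith)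
  calc (4:ℝ)^j * |b (t/(4:ℝ)^j) - b (s/(4:ℝ)^j)| ≤ (4:ℝ)^j * (6 * (t/(4:ℝ)^j - s/(4:ℝ)^j)) := by
        rw [abs_sub_comm] at hb; exact mul_le_mul_of_nonneg_left hb hj.le
    _ = 6 * (t - s) := by field_simp

omit hglu in
include hbdd in
lemma ext_bound {t : ℝ} (ht : 0 ≤ t) : |extnd b t| ≤ 12 * t := by
  rcases eq_or_lt_of_le ht with h | h
  · rw [← h, ext_zero]; simp
  · obtain ⟨m1, m2⟩ := kk_mem h
    have hj : (0:ℝ) < (4:ℝ)^(kk t) := by positivity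
    rw [ext_pos_eq b h, abs_mul, abs_of_pos hj]
    have hb := hbdd (t/(4:ℝ)^(kk t)) (by rw [le_div_iff₀ hj]; linarith) (by rw [div_le_iff₀ hj]; linarith)
    calc (4:ℝ)^(kk t) * |b (t/(4:ℝ)^(kk t))| ≤ (4:ℝ)^(kk t) * 36 := mul_le_mul_of_nonneg_left hb hj.le
      _ ≤ 12 * t := by nlinarith

include hglu hlip in
lemma ext_lip_aux : ∀ n : ℕ, ∀ s t : ℝ, 0 < s → s ≤ t → (kk t - kk s).toNat = n →
    |extnd b t - extnd b s| ≤ 12 * (t - s) := by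
  intro n
  induction n with
  | zero =>
    intro s t hs hst hn
    have hks := kk_mono hs hst
    have heq : kk t = kk s := by omega
    obtain ⟨a1, a2⟩ := kk_mem hs
    obtain ⟨b1, b2⟩ := kk_mem (lt_of_lt_of_le hs hst)
    rw [heq] at b2
    have := ext_block_lip hglu hlip a1 hst b2.le
    linarith [this, abs_nonneg (extnd b t - extnd b s)]
  | succ n ih =>
    intro s t hs hst hn
    have hks := kk_mono hs hst
    have hkt : kk t = kk s + (n+1) := by omega
    obtain ⟨a1, a2⟩ := kk_mem hs
    obtain ⟨b1, b2⟩ := kk_mem (lt_of_lt_of_le hs hst)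
    set B : ℝ := 12 * (4:ℝ)^(kk s) with hB
    have hj : (0:ℝ) < (4:ℝ)^(kk s) := by positivity
    have hBpos : 0 < B := by positivity
    have hsB : s ≤ B := a2.le
    have hBt : B ≤ t := by
      have : (4:ℝ)^(kk s + 1) ≤ (4:ℝ)^(kk t) := zpow_le_zpow_right₀ (by norm_num) (by omega)
      rw [zpow_add₀ (by norm_num : (4:ℝ) ≠ 0)] at this
      simp only [zpow_one] at this
      nlinarith
    have hkB : kk B = kk s + 1 := by
      apply kk_eq
      · rw [zpow_add₀ (by norm_num : (4:ℝ) ≠ 0)]; simp only [zpow_one]; nlinarith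
      · rw [zpow_add₀ (by norm_num : (4:ℝ) ≠ 0)]; simp only [zpow_one]; nlinarith
    have h1 : |extnd b B - extnd b s| ≤ 6 * (B - s) := ext_block_lip hglu hlip a1 hsB (le_refl B)
    have h2 : |extnd b t - extnd b B| ≤ 12 * (t - B) := ih B t hBpos hBt (by omega)
    calc |extnd b t - extnd b s| ≤ |extnd b t - extnd b B| + |extnd b B - extnd b s| := abs_sub_le _ _ _
      _ ≤ 12 * (t - B) + 6 * (B - s) := add_le_add h2 h1
      _ ≤ 12 * (t - s) := by linarith

include hglu hlip hbdd in
lemma ext_lip {s t : ℝ} (hs : 0 ≤ s) (hst : s ≤ t) : |extnd b t - extnd b s| ≤ 12 * (t - s) := by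
  rcases eq_or_lt_of_le hs with h | h
  · rw [← h, ext_zero, sub_zero]
    have := ext_bound hbdd (le_trans hs hst)
    linarith
  · exact ext_lip_aux hglu hlip (kk t - kk s).toNat s t h hst rfl

include hglu hlip hbdd in
lemma ext_contOn : ContinuousOn (extnd b) (Set.Ici (0:ℝ)) := by
  rw [Metric.continuousOn_iff]
  intro x hx ε hε
  refine ⟨ε / 13, by positivity, fun y hy hxy => ?_⟩
  have key : |extnd b y - extnd b x| ≤ 12 * |y - x| := by
    rcases le_total x y with h | h
    · have := ext_lip hglu hlip hbdd hx h
      rw [abs_of_nonneg (by linarith : (0:ℝ) ≤ y - x)]; linarith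
    · have h2 := ext_lip hglu hlip hbdd hy h
      rw [abs_sub_comm] at h2
      rw [abs_sub_comm (y:ℝ) x, abs_of_nonneg (by linarith : (0:ℝ) ≤ x - y)]
      linarith
  rw [Real.dist_eq] at hxy ⊢
  calc |extnd b y - extnd b x| ≤ 12 * |y - x| := key
    _ < 12 * (ε / 13) := mul_lt_mul_of_pos_left hxy (by norm_num)
    _ < ε := by linarith

end extprops

section extmono
variable {b : ℝ → ℝ} (hglu : b 12 = 4 * b 3) (hmon : MonB b) (hnn : NonnegB b)

include hnn in
lemma ext_nonneg {t : ℝ} (ht : 0 ≤ t) : 0 ≤ extnd b t := by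
  rcases eq_or_lt_of_le ht with h | h
  · rw [← h, ext_zero]
  · obtain ⟨m1, m2⟩ := kk_mem h
    have hj : (0:ℝ) < (4:ℝ)^(kk t) := by positivity
    rw [ext_pos_eq b h]
    have := hnn (t/(4:ℝ)^(kk t)) (by rw [le_div_iff₀ hj]; linarith) (by rw [div_le_iff₀ hj]; linarith)
    positivity

include hglu hmon in
lemma ext_block_mono {j : ℤ} {s t : ℝ} (h1 : 3*(4:ℝ)^j ≤ s) (h2 : s ≤ t) (h3 : t ≤ 12*(4:ℝ)^j) :
    extnd b s ≤ extnd b t := by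
  have hj : (0:ℝ) < (4:ℝ)^j := by positivity
  rw [ext_block hglu h1 (le_trans h2 h3), ext_block hglu (le_trans h1 h2) h3]
  have := hmon (s/(4:ℝ)^j) (t/(4:ℝ)^j) (by rw [le_div_iff₀ hj]; linarith)
    (by gcongr) (by rw [div_le_iff₀ hj]; linarith)
  nlinarith

include hglu hmon in
lemma ext_mono_aux : ∀ n : ℕ, ∀ s t : ℝ, 0 < s → s ≤ t → (kk t - kk s).toNat = n →
    extnd b s ≤ extnd b t := by
  intro n
  induction n with
  | zero =>
    intro s t hs hst hn
    have hks := kk_mono hs hst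
    have heq : kk t = kk s := by omega
    obtain ⟨a1, a2⟩ := kk_mem hs
    obtain ⟨b1, b2⟩ := kk_mem (lt_of_lt_of_le hs hst)
    rw [heq] at b2
    exact ext_block_mono hglu hmon a1 hst b2.le
  | succ n ih =>
    intro s t hs hst hn
    have hks := kk_mono hs hst
    obtain ⟨a1, a2⟩ := kk_mem hs
    obtain ⟨b1, b2⟩ := kk_mem (lt_of_lt_of_le hs hst)
    set B : ℝ := 12 * (4:ℝ)^(kk s) with hB
    have hj : (0:ℝ) < (4:ℝ)^(kk s) := by positivity
    have hBpos : 0 < B := by positivity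
    have hBt : B ≤ t := by
      have : (4:ℝ)^(kk s + 1) ≤ (4:ℝ)^(kk t) := zpow_le_zpow_right₀ (by norm_num) (by omega)
      rw [zpow_add₀ (by norm_num : (4:ℝ) ≠ 0)] at this
      simp only [zpow_one] at this
      nlinarith
    have hkB : kk B = kk s + 1 := by
      apply kk_eq
      · rw [zpow_add₀ (by norm_num : (4:ℝ) ≠ 0)]; simp only [zpow_one]; nlinarith
      · rw [zpow_add₀ (by norm_num : (4:ℝ) ≠ 0)]; simp only [zpow_one]; nlinarith
    exact le_trans (ext_block_mono hglu hmon a1 a2.le (le_refl B)) (ih B t hBpos hBt (by omega))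

include hglu hmon hnn in
lemma ext_monoOn : MonotoneOn (extnd b) (Set.Ici (0:ℝ)) := by
  intro s hs t ht hst
  rcases eq_or_lt_of_le (Set.mem_Ici.mp hs) with h | h
  · rw [← h, ext_zero]
    exact ext_nonneg hnn (Set.mem_Ici.mp ht)
  · exact ext_mono_aux hglu hmon (kk t - kk s).toNat s t h hst rfl

end extmono

-- base-level positivity and value lemmas
lemma bG1_pos {x : ℝ} (h3 : 3 ≤ x) (h : 0 < bG1 x) : 6 < x := by
  unfold bG1 at h; split_ifs at h <;> linarith
lemma bM1_val {x : ℝ} (h1 : 6 ≤ x) : bM1 x = 8 := by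
  unfold bM1; split_ifs <;> linarith
lemma bG2_pos {x : ℝ} (h : 0 < bG2 x) : 4 < x ∧ x < 8 := by
  unfold bG2 at h; split_ifs at h <;> constructor <;> linarith
lemma bM2_val {x : ℝ} (h1 : 4 ≤ x) : bM2 x = 4 := by
  unfold bM2; split_ifs <;> linarith
lemma bH1_pos {x : ℝ} (h3 : 3 ≤ x) (h : 0 < bH1 x) : 3 < x ∧ x < 6 := by
  unfold bH1 at h; split_ifs at h <;> constructor <;> linarith
lemma bN1_val {x : ℝ} (h1 : x ≤ 8) : bN1 x = 4 := by
  unfold bN1; split_ifs <;> linarith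
lemma bH2_pos {x : ℝ} (h : 0 < bH2 x) : x < 4 ∨ 8 < x := by
  unfold bH2 at h; split_ifs at h
  · left; linarith
  · linarith
  · right; linarith
lemma bN2_val_low {x : ℝ} (h1 : x ≤ 6) : bN2 x = 2 := by
  unfold bN2; split_ifs <;> linarith
lemma bN2_val_high {x : ℝ} (h1 : 8 ≤ x) : bN2 x = 8 := by
  unfold bN2; split_ifs <;> linarith

-- extnd-level helpers
lemma tau_mem {r : ℝ} (hr : 0 < r) :
    3 ≤ r/(4:ℝ)^(kk r) ∧ r/(4:ℝ)^(kk r) < 12 := by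
  have hj : (0:ℝ) < (4:ℝ)^(kk r) := by positivity
  obtain ⟨m1, m2⟩ := kk_mem hr
  constructor
  · rw [le_div_iff₀ hj]; linarith
  · rw [div_lt_iff₀ hj]; linarith

lemma kk_cmul {c : ℝ} (hc1 : 3 ≤ c) (hc2 : c < 12) (j : ℤ) : kk (c * (4:ℝ)^j) = j := by
  have hj : (0:ℝ) < (4:ℝ)^j := by positivity
  exact kk_eq (by nlinarith) (by nlinarith)

lemma ext_factor {b : ℝ → ℝ} {r : ℝ} (hr : 0 < r) {v : ℝ} (hv : b (r/(4:ℝ)^(kk r)) = v) :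
    extnd b r = v * (4:ℝ)^(kk r) := by
  rw [ext_pos_eq b hr, hv]; ring

lemma pos_unscale {b : ℝ → ℝ} {r : ℝ} (hr : 0 < r) (h : 0 < extnd b r) :
    0 < b (r/(4:ℝ)^(kk r)) := by
  have hj : (0:ℝ) < (4:ℝ)^(kk r) := by positivity
  rw [ext_pos_eq b hr] at h
  by_contra h'
  push_neg at h'
  nlinarith

-- crossing lemma
lemma cross_block {s t : ℝ} (hs : 0 < s) (hst : s ≤ t) (hne : kk s < kk t) :
    s ≤ 12*(4:ℝ)^(kk s) ∧ 12*(4:ℝ)^(kk s) ≤ t ∧ kk (12*(4:ℝ)^(kk s)) = kk s + 1 := by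
  obtain ⟨a1, a2⟩ := kk_mem hs
  obtain ⟨b1, b2⟩ := kk_mem (lt_of_lt_of_le hs hst)
  have hj : (0:ℝ) < (4:ℝ)^(kk s) := by positivity
  have h41 : (4:ℝ)^(kk s + 1) = 4 * (4:ℝ)^(kk s) := by
    rw [zpow_add₀ (by norm_num : (4:ℝ) ≠ 0)]; ring
  refine ⟨a2.le, ?_, ?_⟩
  · have : (4:ℝ)^(kk s + 1) ≤ (4:ℝ)^(kk t) := zpow_le_zpow_right₀ (by norm_num) (by omega)
    rw [h41] at this; nlinarith
  · have := kk_cmul (by norm_num : (3:ℝ) ≤ 3) (by norm_num) (kk s + 1)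
    rw [h41] at this
    convert this using 2; ring

-- complementarity for (bG1, bM1)
lemma compl_G1M1 {s t : ℝ} (hs : 0 ≤ s) (hst : s ≤ t)
    (hpos : ∀ r ∈ Set.Icc s t, 0 < extnd bG1 r) : extnd bM1 s = extnd bM1 t := by
  rcases eq_or_lt_of_le hs with h | h
  · exfalso
    have := hpos 0 ⟨le_of_eq h.symm, by linarith⟩
    rw [ext_zero] at this; exact lt_irrefl 0 this
  have ht : 0 < t := lt_of_lt_of_le h hst
  have hks := kk_mono h hst
  rcases eq_or_lt_of_le hks with hkeq | hklt
  · -- same block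
    have hjs : (0:ℝ) < (4:ℝ)^(kk s) := by positivity
    have ps := pos_unscale h (hpos s ⟨le_refl s, hst⟩)
    have pt := pos_unscale ht (hpos t ⟨hst, le_refl t⟩)
    have hs6 : 6 < s/(4:ℝ)^(kk s) := bG1_pos (tau_mem h).1 ps
    have ht6 : 6 < t/(4:ℝ)^(kk t) := bG1_pos (tau_mem ht).1 pt
    rw [ext_factor h (bM1_val hs6.le), ext_factor ht (bM1_val ht6.le), hkeq]
  · exfalso
    obtain ⟨c1, c2, c3⟩ := cross_block h hst hklt
    set B := 12*(4:ℝ)^(kk s) with hBdef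
    have hjs : (0:ℝ) < (4:ℝ)^(kk s) := by positivity
    have hB : 0 < B := by positivity
    have pB := pos_unscale hB (hpos B ⟨c1, c2⟩)
    have h6 : 6 < B/(4:ℝ)^(kk B) := bG1_pos (tau_mem hB).1 pB
    rw [c3, zpow_add₀ (by norm_num : (4:ℝ) ≠ 0), zpow_one] at h6
    rw [lt_div_iff₀ (by positivity)] at h6
    nlinarith

-- complementarity for (bG2, bM2)
lemma compl_G2M2 {s t : ℝ} (hs : 0 ≤ s) (hst : s ≤ t)
    (hpos : ∀ r ∈ Set.Icc s t, 0 < extnd bG2 r) : extnd bM2 s = extnd bM2 t := by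
  rcases eq_or_lt_of_le hs with h | h
  · exfalso
    have := hpos 0 ⟨le_of_eq h.symm, by linarith⟩
    rw [ext_zero] at this; exact lt_irrefl 0 this
  have ht : 0 < t := lt_of_lt_of_le h hst
  have hks := kk_mono h hst
  rcases eq_or_lt_of_le hks with hkeq | hklt
  · have ps := pos_unscale h (hpos s ⟨le_refl s, hst⟩)
    have pt := pos_unscale ht (hpos t ⟨hst, le_refl t⟩)
    have hs4 := (bG2_pos ps).1
    have ht4 := (bG2_pos pt).1
    rw [ext_factor h (bM2_val hs4.le), ext_factor ht (bM2_val ht4.le), hkeq]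
  · exfalso
    obtain ⟨c1, c2, c3⟩ := cross_block h hst hklt
    set B := 12*(4:ℝ)^(kk s) with hBdef
    have hjs : (0:ℝ) < (4:ℝ)^(kk s) := by positivity
    have hB : 0 < B := by positivity
    have pB := pos_unscale hB (hpos B ⟨c1, c2⟩)
    have h4 := (bG2_pos pB).1
    rw [c3, zpow_add₀ (by norm_num : (4:ℝ) ≠ 0), zpow_one] at h4
    rw [lt_div_iff₀ (by positivity)] at h4
    nlinarith

-- complementarity for (bH1, bN1)
lemma compl_H1N1 {s t : ℝ} (hs : 0 ≤ s) (hst : s ≤ t)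
    (hpos : ∀ r ∈ Set.Icc s t, 0 < extnd bH1 r) : extnd bN1 s = extnd bN1 t := by
  rcases eq_or_lt_of_le hs with h | h
  · exfalso
    have := hpos 0 ⟨le_of_eq h.symm, by linarith⟩
    rw [ext_zero] at this; exact lt_irrefl 0 this
  have ht : 0 < t := lt_of_lt_of_le h hst
  have hks := kk_mono h hst
  rcases eq_or_lt_of_le hks with hkeq | hklt
  · have ps := pos_unscale h (hpos s ⟨le_refl s, hst⟩)
    have pt := pos_unscale ht (hpos t ⟨hst, le_refl t⟩)
    have hs6 := (bH1_pos (tau_mem h).1 ps).2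
    have ht6 := (bH1_pos (tau_mem ht).1 pt).2
    rw [ext_factor h (bN1_val (by linarith)), ext_factor ht (bN1_val (by linarith)), hkeq]
  · exfalso
    obtain ⟨c1, c2, c3⟩ := cross_block h hst hklt
    set B := 12*(4:ℝ)^(kk s) with hBdef
    have hjs : (0:ℝ) < (4:ℝ)^(kk s) := by positivity
    have hB : 0 < B := by positivity
    have pB := pos_unscale hB (hpos B ⟨c1, c2⟩)
    have h3 := (bH1_pos (tau_mem hB).1 pB).1
    rw [c3, zpow_add₀ (by norm_num : (4:ℝ) ≠ 0), zpow_one] at h3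
    rw [lt_div_iff₀ (by positivity)] at h3
    nlinarith

lemma no_pos_at_four (i : ℤ) : ¬ 0 < extnd bH2 (4*(4:ℝ)^i) := by
  intro h
  have hj : (0:ℝ) < (4:ℝ)^i := by positivity
  have hZ : (0:ℝ) < 4*(4:ℝ)^i := by positivity
  have hk : kk (4*(4:ℝ)^i) = i := kk_cmul (by norm_num) (by norm_num) i
  have hp := pos_unscale hZ h
  rw [hk] at hp
  have hτ : (4*(4:ℝ)^i)/(4:ℝ)^i = 4 := by field_simp
  rw [hτ] at hp
  rcases bH2_pos hp with h' | h' <;> linarith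

lemma four_zpow_succ (i : ℤ) : (4:ℝ)^(i+1) = 4 * (4:ℝ)^i := by
  rw [zpow_add₀ (by norm_num : (4:ℝ) ≠ 0), zpow_one]; ring

-- complementarity for (bH2, bN2)
lemma compl_H2N2 {s t : ℝ} (hs : 0 ≤ s) (hst : s ≤ t)
    (hpos : ∀ r ∈ Set.Icc s t, 0 < extnd bH2 r) : extnd bN2 s = extnd bN2 t := by
  rcases eq_or_lt_of_le hs with h | h
  · exfalso
    have := hpos 0 ⟨le_of_eq h.symm, by linarith⟩
    rw [ext_zero] at this; exact lt_irrefl 0 this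
  have ht : 0 < t := lt_of_lt_of_le h hst
  have hks := kk_mono h hst
  obtain ⟨a1, a2⟩ := kk_mem h
  obtain ⟨b1, b2⟩ := kk_mem ht
  have hjs : (0:ℝ) < (4:ℝ)^(kk s) := by positivity
  have hjt : (0:ℝ) < (4:ℝ)^(kk t) := by positivity
  have hss := bH2_pos (pos_unscale h (hpos s ⟨le_refl s, hst⟩))
  have htt := bH2_pos (pos_unscale ht (hpos t ⟨hst, le_refl t⟩))
  rw [div_lt_iff₀ hjs, lt_div_iff₀ hjs] at hss
  rw [div_lt_iff₀ hjt, lt_div_iff₀ hjt] at htt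
  -- rule out kk t ≥ kk s + 2
  have hcase : kk t = kk s ∨ kk t = kk s + 1 := by
    by_contra hcon
    push_neg at hcon
    have h2 : kk s + 2 ≤ kk t := by omega
    apply no_pos_at_four (kk s + 1)
    apply hpos
    have e1 : (4:ℝ)^(kk s + 1) = 4 * (4:ℝ)^(kk s) := four_zpow_succ _
    have e2 : (4:ℝ)^(kk s + 2) ≤ (4:ℝ)^(kk t) := zpow_le_zpow_right₀ (by norm_num) h2
    have e3 : (4:ℝ)^(kk s + 2) = 16 * (4:ℝ)^(kk s) := by
      rw [show kk s + 2 = (kk s + 1) + 1 by ring, four_zpow_succ, four_zpow_succ]; ring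
    constructor
    · rw [e1]; nlinarith
    · rw [e1]; nlinarith
  rcases hcase with hk1 | hk1
  · -- same block
    rw [hk1] at htt b1 b2
    rcases hss with hsl | hsh
    · -- s < 4*4^j, so t < 4*4^j
      have htl : t < 4 * (4:ℝ)^(kk s) := by
        rcases htt with h' | h'
        · exact h'
        · exfalso
          apply no_pos_at_four (kk s)
          apply hpos
          exact ⟨by linarith, by linarith⟩
      have vs : extnd bN2 s = 2 * (4:ℝ)^(kk s) := by
        exact ext_factor h (bN2_val_low (by rw [div_le_iff₀ hjs]; linarith))
      have vt : extnd bN2 t = 2 * (4:ℝ)^(kk s) := by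
        have : extnd bN2 t = 2 * (4:ℝ)^(kk t) := by
          exact ext_factor ht (bN2_val_low (by rw [div_le_iff₀ hjt, hk1]; linarith))
        rw [this, hk1]
      rw [vs, vt]
    · -- s > 8*4^j, so t > 8*4^j
      have vs : extnd bN2 s = 8 * (4:ℝ)^(kk s) := by
        exact ext_factor h (bN2_val_high (by rw [le_div_iff₀ hjs]; linarith))
      have vt : extnd bN2 t = 8 * (4:ℝ)^(kk s) := by
        have : extnd bN2 t = 8 * (4:ℝ)^(kk t) := by
          exact ext_factor ht (bN2_val_high (by rw [le_div_iff₀ hjt, hk1]; linarith))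
        rw [this, hk1]
      rw [vs, vt]
  · -- adjacent blocks
    have e1 : (4:ℝ)^(kk t) = 4 * (4:ℝ)^(kk s) := by rw [hk1, four_zpow_succ]
    rw [e1] at b1 b2 htt
    -- s must satisfy s > 8*4^{kk s}
    have hsh : 8 * (4:ℝ)^(kk s) < s := by
      rcases hss with h' | h'
      · exfalso
        apply no_pos_at_four (kk s)
        apply hpos
        exact ⟨by linarith, by linarith⟩
      · exact h'
    -- t must satisfy t < 4*4^{kk t}
    have htl : t < 4 * (4 * (4:ℝ)^(kk s)) := by
      rcases htt with h' | h'
      · exact h'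
      · exfalso
        apply no_pos_at_four (kk t)
        apply hpos
        rw [e1]
        exact ⟨by linarith, by linarith⟩
    have vs : extnd bN2 s = 8 * (4:ℝ)^(kk s) :=
      ext_factor h (bN2_val_high (by rw [le_div_iff₀ hjs]; linarith))
    have vt : extnd bN2 t = 8 * (4:ℝ)^(kk s) := by
      have h6 : t/(4:ℝ)^(kk t) ≤ 6 := by rw [div_le_iff₀ hjt, e1]; linarith
      have h2 : extnd bN2 t = 2 * (4:ℝ)^(kk t) := ext_factor ht (bN2_val_low h6)
      rw [h2, e1]; ring
    rw [vs, vt]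

open Set Matrix

noncomputable def fFun : ℝ → Fin 2 → ℝ := fun t => ![extnd bF1 t, extnd bF2 t]
noncomputable def gFun : ℝ → Fin 2 → ℝ := fun t => ![extnd bG1 t, extnd bG2 t]
noncomputable def mFun : ℝ → Fin 2 → ℝ := fun t => ![extnd bM1 t, extnd bM2 t]
noncomputable def hFun : ℝ → Fin 2 → ℝ := fun t => ![extnd bH1 t, extnd bH2 t]
noncomputable def nFun : ℝ → Fin 2 → ℝ := fun t => ![extnd bN1 t, extnd bN2 t]

lemma contOn_pair {b1 b2 : ℝ → ℝ} (h1 : ContinuousOn b1 (Set.Ici 0))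
    (h2 : ContinuousOn b2 (Set.Ici 0)) :
    ContinuousOn (fun t => (![b1 t, b2 t] : Fin 2 → ℝ)) (Set.Ici (0:ℝ)) := by
  rw [continuousOn_pi]
  intro i
  fin_cases i
  · simpa using h1
  · simpa using h2

lemma mulVec_R (v : Fin 2 → ℝ) :
    (!![(1:ℝ), -2; 1, 1]).mulVec v = ![v 0 - 2 * v 1, v 0 + v 1] := by
  funext i
  fin_cases i <;>
    simp [Matrix.mulVec, dotProduct, Fin.sum_univ_two] <;> ring

lemma eqG1 {t : ℝ} (ht : 0 ≤ t) : extnd bG1 t = extnd bF1 t + (extnd bM1 t - 2 * extnd bM2 t) := by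
  rcases eq_or_lt_of_le ht with h | h
  · rw [← h]; simp [ext_zero]
  · rw [ext_pos_eq _ h, ext_pos_eq _ h, ext_pos_eq _ h, ext_pos_eq _ h, idG1]; ring

lemma eqG2 {t : ℝ} (ht : 0 ≤ t) : extnd bG2 t = extnd bF2 t + (extnd bM1 t + extnd bM2 t) := by
  rcases eq_or_lt_of_le ht with h | h
  · rw [← h]; simp [ext_zero]
  · rw [ext_pos_eq _ h, ext_pos_eq _ h, ext_pos_eq _ h, ext_pos_eq _ h, idG2]; ring

lemma eqH1 {t : ℝ} (ht : 0 ≤ t) : extnd bH1 t = extnd bF1 t + (extnd bN1 t - 2 * extnd bN2 t) := by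
  rcases eq_or_lt_of_le ht with h | h
  · rw [← h]; simp [ext_zero]
  · rw [ext_pos_eq _ h, ext_pos_eq _ h, ext_pos_eq _ h, ext_pos_eq _ h, idH1]; ring

lemma eqH2 {t : ℝ} (ht : 0 ≤ t) : extnd bH2 t = extnd bF2 t + (extnd bN1 t + extnd bN2 t) := by
  rcases eq_or_lt_of_le ht with h | h
  · rw [← h]; simp [ext_zero]
  · rw [ext_pos_eq _ h, ext_pos_eq _ h, ext_pos_eq _ h, ext_pos_eq _ h, idH2]; ring

lemma kk_four : kk 4 = 0 := by
  have := kk_cmul (by norm_num : (3:ℝ) ≤ 4) (by norm_num) 0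
  simpa using this

lemma extG1_four : extnd bG1 4 = 0 := by
  rw [ext_pos_eq _ (by norm_num : (0:ℝ) < 4), kk_four]
  norm_num [bG1]

lemma extH1_four : extnd bH1 4 = 6 := by
  rw [ext_pos_eq _ (by norm_num : (0:ℝ) < 4), kk_four]
  norm_num [bH1]

lemma isSko_gm : IsSkorokhod (!![1, -2; 1, 1]) fFun gFun mFun := by
  refine ⟨?_, ?_, ?_, ?_, ?_, ?_, ?_⟩
  · exact contOn_pair (ext_contOn gluG1 lipG1 bddG1) (ext_contOn gluG2 lipG2 bddG2)
  · exact contOn_pair (ext_contOn gluM1 lipM1 bddM1) (ext_contOn gluM2 lipM2 bddM2)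
  · intro t ht j
    fin_cases j
    · simpa [gFun] using ext_nonneg nnG1 ht
    · simpa [gFun] using ext_nonneg nnG2 ht
  · funext i; fin_cases i <;> simp [mFun, ext_zero]
  · intro j
    fin_cases j
    · simp only [mFun, Matrix.cons_val_zero]
      exact ext_monoOn gluM1 monM1 nnM1
    · simp only [mFun, Matrix.cons_val_one, Matrix.head_cons]
      exact ext_monoOn gluM2 monM2 nnM2
  · intro t ht
    rw [mulVec_R]
    funext i
    fin_cases i
    · simp only [gFun, fFun, mFun, Pi.add_apply, Matrix.cons_val_zero, Matrix.cons_val_one,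
        Matrix.head_cons]
      exact eqG1 ht
    · simp only [gFun, fFun, mFun, Pi.add_apply, Matrix.cons_val_zero, Matrix.cons_val_one,
        Matrix.head_cons]
      exact eqG2 ht
  · intro j s t hs hst hpos
    fin_cases j
    · simp only [mFun, Matrix.cons_val_zero]
      apply compl_G1M1 hs hst
      intro r hr
      simpa [gFun] using hpos r hr
    · simp only [mFun, Matrix.cons_val_one, Matrix.head_cons]
      apply compl_G2M2 hs hst
      intro r hr
      simpa [gFun] using hpos r hr

lemma isSko_hn : IsSkorokhod (!![1, -2; 1, 1]) fFun hFun nFun := by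
  refine ⟨?_, ?_, ?_, ?_, ?_, ?_, ?_⟩
  · exact contOn_pair (ext_contOn gluH1 lipH1 bddH1) (ext_contOn gluH2 lipH2 bddH2)
  · exact contOn_pair (ext_contOn gluN1 lipN1 bddN1) (ext_contOn gluN2 lipN2 bddN2)
  · intro t ht j
    fin_cases j
    · simpa [hFun] using ext_nonneg nnH1 ht
    · simpa [hFun] using ext_nonneg nnH2 ht
  · funext i; fin_cases i <;> simp [nFun, ext_zero]
  · intro j
    fin_cases j
    · simp only [nFun, Matrix.cons_val_zero]
      exact ext_monoOn gluN1 monN1 nnN1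
    · simp only [nFun, Matrix.cons_val_one, Matrix.head_cons]
      exact ext_monoOn gluN2 monN2 nnN2
  · intro t ht
    rw [mulVec_R]
    funext i
    fin_cases i
    · simp only [hFun, fFun, nFun, Pi.add_apply, Matrix.cons_val_zero, Matrix.cons_val_one,
        Matrix.head_cons]
      exact eqH1 ht
    · simp only [hFun, fFun, nFun, Pi.add_apply, Matrix.cons_val_zero, Matrix.cons_val_one,
        Matrix.head_cons]
      exact eqH2 ht
  · intro j s t hs hst hpos
    fin_cases j
    · simp only [nFun, Matrix.cons_val_zero]
      apply compl_H1N1 hs hst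
      intro r hr
      simpa [hFun] using hpos r hr
    · simp only [nFun, Matrix.cons_val_one, Matrix.head_cons]
      apply compl_H2N2 hs hst
      intro r hr
      simpa [hFun] using hpos r hr

theorem mandelbaum_counterexample :
    ∃ f : ℝ → Fin 2 → ℝ, ContinuousOn f (Set.Ici 0) ∧ (∀ j, 0 ≤ f 0 j) ∧
      ∃ g m gbar mbar : ℝ → Fin 2 → ℝ,
        IsSkorokhod (!![1, -2; 1, 1]) f g m ∧
        IsSkorokhod (!![1, -2; 1, 1]) f gbar mbar ∧
        ∃ t ∈ Set.Ici (0:ℝ), g t ≠ gbar t := by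
  refine ⟨fFun, ?_, ?_, gFun, mFun, hFun, nFun, isSko_gm, isSko_hn, 4, by norm_num, ?_⟩
  · exact contOn_pair (ext_contOn gluF1 lipF1 bddF1) (ext_contOn gluF2 lipF2 bddF2)
  · intro j; fin_cases j <;> simp [fFun, ext_zero]
  · intro heq
    have := congrFun heq 0
    rw [show (gFun 4 0 : ℝ) = extnd bG1 4 from rfl, show (hFun 4 0 : ℝ) = extnd bH1 4 from rfl,
      extG1_four, extH1_four] at this
    norm_num at this
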